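/- Let Φ₁ : V → H₁ and Φ₂ : V → H₂ be two feature maps into complex Hilbert spaces, inducing kernels K₁ and K₂, and let γ > 0. Assume there is a linear map T : H₁ → H₂ such that ‖Th‖_{H₂} ≤ γ ‖h‖_{H₁} for all h ∈ H₁ and ⟨h, Φ₁(v)⟩_{H₁} = ⟨Th, Φ₂(v)⟩_{H₂} for all h ∈ H₁ and v ∈ V (i.e., every RKHS function of K₁ lies in the RKHS of K₂ with norm inflated by at most γ, which is the kernel domination condition K₁ ≪ γ² K₂). Then for every complex Borel measure μ on V satisfying the kernel moment condition for both Φ₁ and Φ₂, the mean elements satisfy ‖K₁[μ]‖_{H₁} ≤ γ ‖K₂[μ]‖_{H₂}. -/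

import Mathlib

open MeasureTheory

local notation "⟪" x ", " y "⟫" => @inner ℂ _ _ x y

/-- **Kernel domination `K₁ ≪ γ² K₂` implies domination of the mean elements.**
The domination is expressed by a linear map `T : H₁ → H₂` with `‖T h‖ ≤ γ‖h‖` and
`⟪h, Φ₁ v⟫ = ⟪T h, Φ₂ v⟫` for all `h, v` (every RKHS function of `K₁` lies in the RKHS of
`K₂` with norm inflated by at most `γ`).  The complex Borel measure `μ = ρ · ν` (polar
form, `ν = |μ|` finite, `‖ρ‖ = 1` a.e.) satisfies the kernel moment condition for both
feature maps.  Then `‖K₁[μ]‖_{H₁} ≤ γ ‖K₂[μ]‖_{H₂}`. -/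
theorem stmt_3 {V H₁ H₂ : Type*} [MeasurableSpace V]
    [NormedAddCommGroup H₁] [InnerProductSpace ℂ H₁] [CompleteSpace H₁]
    [NormedAddCommGroup H₂] [InnerProductSpace ℂ H₂] [CompleteSpace H₂]
    (Φ₁ : V → H₁) (Φ₂ : V → H₂) (γ : ℝ) (hγ : 0 < γ)
    (T : H₁ →ₗ[ℂ] H₂) (hT : ∀ h : H₁, ‖T h‖ ≤ γ * ‖h‖)
    (hTΦ : ∀ (h : H₁) (v : V), ⟪h, Φ₁ v⟫ = ⟪T h, Φ₂ v⟫)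
    (ν : Measure V) [IsFiniteMeasure ν]
    (ρ : V → ℂ) (hρm : Measurable ρ) (hρ1 : ∀ᵐ v ∂ν, ‖ρ v‖ = 1)
    (hΦ₁m : AEStronglyMeasurable Φ₁ ν) (hΦ₂m : AEStronglyMeasurable Φ₂ ν)
    (hmom₁ : Integrable (fun v => ‖Φ₁ v‖) ν) (hmom₂ : Integrable (fun v => ‖Φ₂ v‖) ν) :
    ‖∫ v, ρ v • Φ₁ v ∂ν‖ ≤ γ * ‖∫ v, ρ v • Φ₂ v ∂ν‖ := by
  have hi1 : Integrable (fun v => ρ v • Φ₁ v) ν := by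
    refine Integrable.mono' hmom₁ (hρm.aestronglyMeasurable.smul hΦ₁m) ?_
    filter_upwards [hρ1] with v hv
    rw [norm_smul, hv, one_mul]
  have hi2 : Integrable (fun v => ρ v • Φ₂ v) ν := by
    refine Integrable.mono' hmom₂ (hρm.aestronglyMeasurable.smul hΦ₂m) ?_
    filter_upwards [hρ1] with v hv
    rw [norm_smul, hv, one_mul]
  set m₁ := ∫ v, ρ v • Φ₁ v ∂ν with hm₁
  set m₂ := ∫ v, ρ v • Φ₂ v ∂ν with hm₂
  have key : ⟪m₁, m₁⟫ = ⟪T m₁, m₂⟫ := by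
    rw [hm₁, hm₂, ← integral_inner hi1, ← integral_inner hi2]
    refine integral_congr_ae (Filter.Eventually.of_forall fun v => ?_)
    simp only [inner_smul_right, hTΦ _ v]
  have h1 : ‖m₁‖ ^ 2 = ‖⟪T m₁, m₂⟫‖ := by
    rw [← key, inner_self_eq_norm_sq_to_K]
    simp [sq_abs]
  have h2 : ‖m₁‖ ^ 2 ≤ γ * ‖m₁‖ * ‖m₂‖ := by
    rw [h1]
    calc ‖⟪T m₁, m₂⟫‖ ≤ ‖T m₁‖ * ‖m₂‖ := norm_inner_le_norm _ _
    _ ≤ γ * ‖m₁‖ * ‖m₂‖ := by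
        exact mul_le_mul_of_nonneg_right (hT m₁) (norm_nonneg _)
  rcases eq_or_lt_of_le (norm_nonneg m₁) with h0 | h0
  · rw [← h0]; positivity
  · nlinarith [norm_nonneg m₂]
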